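/- Let G be a C_{2k}-free simple graph (k ≥ 2) and let a be a vertex of G. Let E_1 be the set of edges of G with both endpoints adjacent to a, and E_2 the set of edges uv of G with u adjacent to a and v at distance exactly 2 from a. Then the graph formed by the edges E_1 ∪ E_2 contains no cycle of length greater than 2k-2. -/

import Mathlib

open SimpleGraph

lemma my_support_eq_map_getVert {V : Type*} {G : SimpleGraph V} :
    ∀ {u v : V} (p : G.Walk u v), p.support = (List.range (p.length + 1)).map p.getVert := by
  intro u v p
  induction p with
  | nil => simp [Walk.getVert]
  | cons h q ih =>
    rw [Walk.support_cons, Walk.length_cons, ih, List.range_succ_eq_map]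
    rw [List.range_succ_eq_map, List.range_succ_eq_map]
    simp [List.map_map, Function.comp_def, Walk.getVert_cons_succ, Walk.getVert_zero]

lemma my_exists_walk_chain {V : Type*} (G : SimpleGraph V) (f : ℕ → V) :
    ∀ (n : ℕ), (∀ j < n, G.Adj (f j) (f (j + 1))) →
      ∃ p : G.Walk (f 0) (f n), p.length = n ∧ p.support = (List.range (n + 1)).map f := by
  intro n
  induction n with
  | zero => intro _; exact ⟨Walk.nil, rfl, by simp [List.range_succ]⟩
  | succ n ih =>
    intro h
    obtain ⟨p, hlen, hsupp⟩ := ih (fun j hj => h j (by omega))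
    refine ⟨p.concat (h n (by omega)), ?_, ?_⟩
    · rw [Walk.length_concat, hlen]
    · rw [Walk.support_concat, hsupp,
        show List.range (n + 1 + 1) = List.range (n + 1) ++ [n + 1] from List.range_succ]
      simp

lemma my_parity (χ : ℕ → ℕ) (ℓ e : ℕ) (hℓpos : 0 < ℓ)
    (hper : ∀ m, χ (m + ℓ) = χ m) (hle : ∀ m, χ m ≤ 1)
    (hind : ∀ m, χ m + χ (m + 1) ≤ 1) (hstar : ∀ m, 1 ≤ χ m + χ (m + 2 * e)) : False := by
  have hperk : ∀ q m, χ (m + ℓ * q) = χ m := by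
    intro q
    induction q with
    | zero => simp
    | succ q ih =>
      intro m
      rw [Nat.mul_succ, ← Nat.add_assoc, hper, ih]
  have hmodeq : ∀ m t, χ (m % ℓ + t) = χ (m + t) := by
    intro m t
    obtain ⟨q, hq⟩ : ∃ q, m = m % ℓ + ℓ * q := ⟨m / ℓ, by
      have := Nat.mod_add_div m ℓ; omega⟩
    conv_rhs => rw [hq]
    rw [show m % ℓ + ℓ * q + t = (m % ℓ + t) + ℓ * q by ring, hperk]
  set S := ∑ i ∈ Finset.range ℓ, χ i with hS
  have hshift : ∀ t, ∑ i ∈ Finset.range ℓ, χ (i + t) = S := by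
    intro t
    induction t with
    | zero => simp [hS]
    | succ t ih =>
      have h1 : ∑ i ∈ Finset.range (ℓ + 1), χ (i + t)
          = (∑ i ∈ Finset.range ℓ, χ (i + 1 + t)) + χ (0 + t) :=
        Finset.sum_range_succ' (fun i => χ (i + t)) ℓ
      have h2 : ∑ i ∈ Finset.range (ℓ + 1), χ (i + t) = S + χ (0 + t) := by
        rw [Finset.sum_range_succ, ih]
        congr 1
        rw [Nat.zero_add, Nat.add_comm ℓ t, hper]
      have h3 : ∑ i ∈ Finset.range ℓ, χ (i + 1 + t) = S := by omega
      calc ∑ i ∈ Finset.range ℓ, χ (i + (t + 1))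
          = ∑ i ∈ Finset.range ℓ, χ (i + 1 + t) := by
            apply Finset.sum_congr rfl
            intro j _
            congr 1
            omega
        _ = S := h3
  have hL : ℓ ≤ S + S := by
    calc ℓ = ∑ _i ∈ Finset.range ℓ, 1 := by simp
      _ ≤ ∑ i ∈ Finset.range ℓ, (χ i + χ (i + 2 * e)) :=
          Finset.sum_le_sum (fun i _ => hstar i)
      _ = S + S := by rw [Finset.sum_add_distrib, hshift (2 * e), ← hS]
  have hU : ∑ i ∈ Finset.range ℓ, (χ i + χ (i + 1)) = S + S := by
    rw [Finset.sum_add_distrib, hshift 1, ← hS]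
  have hallone : ∀ i, χ i + χ (i + 1) = 1 := by
    intro i
    have a1 : χ (i % ℓ) = χ i := by simpa using hmodeq i 0
    have a2 : χ (i % ℓ + 1) = χ (i + 1) := hmodeq i 1
    by_contra hne
    have h0 : χ (i % ℓ) + χ (i % ℓ + 1) = 0 := by have := hind i; omega
    have hlt : ∑ j ∈ Finset.range ℓ, (χ j + χ (j + 1)) < ∑ _j ∈ Finset.range ℓ, 1 := by
      apply Finset.sum_lt_sum (fun j _ => hind j)
      exact ⟨i % ℓ, Finset.mem_range.2 (Nat.mod_lt _ hℓpos), by omega⟩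
    simp only [Finset.sum_const, Finset.card_range, smul_eq_mul, mul_one] at hlt
    omega
  have htwo : ∀ i, χ (i + 2) = χ i := by
    intro i
    have a := hallone i
    have b : χ (i + 1) + χ (i + 2) = 1 := hallone (i + 1)
    omega
  have heven : ∀ j i, χ (i + 2 * j) = χ i := by
    intro j
    induction j with
    | zero => simp
    | succ j ih =>
      intro i
      rw [show i + 2 * (j + 1) = (i + 2 * j) + 2 by ring, htwo, ih]
  have h01 := hallone 0
  have c0 := hstar 0
  rw [heven e 0] at c0
  have c1 := hstar (0 + 1)
  rw [heven e (0 + 1)] at c1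
  omega

/-- Let `G` be `C_{2k}`-free (`k ≥ 2`) and `a` a vertex. The graph formed by the edges of `G`
with both endpoints adjacent to `a` (`E₁`), together with the edges of `G` with one endpoint
adjacent to `a` and the other at distance exactly 2 from `a` (`E₂`), contains no cycle of
length greater than `2k - 2`. -/
theorem stmt_3 {V : Type*} (G : SimpleGraph V) (k : ℕ) (hk : 2 ≤ k)
    (hfree : ∀ (v : V) (w : G.Walk v v), w.IsCycle → w.length ≠ 2 * k) (a : V) :
    ∀ (v : V)
      (w : (SimpleGraph.fromRel
        (fun u x => G.Adj u x ∧ G.Adj a u ∧ (G.Adj a x ∨ G.dist a x = 2))).Walk v v),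
      w.IsCycle → w.length ≤ 2 * k - 2 := by
  classical
  intro v w hw
  by_contra hlen
  push_neg at hlen
  set ℓ := w.length with hℓdef
  have h3 : 3 ≤ ℓ := hw.three_le_length
  have hℓpos : 0 < ℓ := by omega
  -- adjacency consequences in H
  have hGadj : ∀ {u x : V},
      (SimpleGraph.fromRel
        (fun u x => G.Adj u x ∧ G.Adj a u ∧ (G.Adj a x ∨ G.dist a x = 2))).Adj u x →
      G.Adj u x ∧ (G.Adj a u ∨ G.Adj a x) ∧ u ≠ a := by
    intro u x h
    rw [SimpleGraph.fromRel_adj] at h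
    obtain ⟨hne, h | h⟩ := h
    · exact ⟨h.1, Or.inl h.2.1, h.2.1.ne'⟩
    · refine ⟨h.1.symm, Or.inr h.2.1, ?_⟩
      rcases h.2.2 with h' | h'
      · exact h'.ne'
      · rintro rfl
        rw [SimpleGraph.dist_self] at h'
        omega
  set f0 : ℕ → V := fun m => w.getVert (m % ℓ) with hf0def
  have hH : ∀ m : ℕ,
      (SimpleGraph.fromRel
        (fun u x => G.Adj u x ∧ G.Adj a u ∧ (G.Adj a x ∨ G.dist a x = 2))).Adj
        (f0 m) (f0 (m + 1)) := by
    intro m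
    have h1 := w.adj_getVert_succ (Nat.mod_lt m hℓpos)
    have h2 : f0 (m + 1) = w.getVert (m % ℓ + 1) := by
      rcases Nat.lt_or_ge (m % ℓ + 1) ℓ with h | h
      · simp only [hf0def]
        congr 1
        rw [Nat.add_mod, Nat.mod_eq_of_lt (show 1 < ℓ by omega), Nat.mod_eq_of_lt h]
      · have he : m % ℓ + 1 = ℓ := by have := Nat.mod_lt m hℓpos; omega
        have h0 : (m + 1) % ℓ = 0 := by
          rw [Nat.add_mod, Nat.mod_eq_of_lt (show 1 < ℓ by omega), he, Nat.mod_self]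
        simp only [hf0def, h0]
        rw [Walk.getVert_zero, he, hℓdef, Walk.getVert_length]
    rw [h2]
    exact h1
  have hG : ∀ m, G.Adj (f0 m) (f0 (m + 1)) := fun m => (hGadj (hH m)).1
  have hN : ∀ m, G.Adj a (f0 m) ∨ G.Adj a (f0 (m + 1)) := fun m => (hGadj (hH m)).2.1
  have hna : ∀ m, f0 m ≠ a := fun m => (hGadj (hH m)).2.2
  set χ : ℕ → ℕ := fun m => if G.Adj a (f0 m) then 0 else 1 with hχdef
  have hle : ∀ m, χ m ≤ 1 := by
    intro m
    simp only [hχdef]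
    split <;> omega
  have hper : ∀ m, χ (m + ℓ) = χ m := by
    intro m
    simp only [hχdef, hf0def, Nat.add_mod_right]
  have hind : ∀ m, χ m + χ (m + 1) ≤ 1 := by
    intro m
    rcases hN m with h | h
    · have h0 : χ m = 0 := by simp [hχdef, h]
      have := hle (m + 1); omega
    · have h0 : χ (m + 1) = 0 := by simp [hχdef, h]
      have := hle m; omega
  have hf0mod : ∀ m, f0 (m % ℓ) = f0 m := by
    intro m
    simp only [hf0def]
    congr 1
    exact Nat.mod_eq_of_lt (Nat.mod_lt m hℓpos)
  have hf0modadd : ∀ m t, f0 (m % ℓ + t) = f0 (m + t) := by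
    intro m t
    simp only [hf0def]
    congr 1
    exact (Nat.mod_modEq m ℓ).add_right t
  have hgood : ∃ i, i < ℓ ∧ G.Adj a (f0 i) ∧ G.Adj a (f0 (i + (2 * k - 2))) := by
    by_contra hno
    push_neg at hno
    refine my_parity χ ℓ (k - 1) hℓpos hper hle hind ?_
    intro m
    rw [show 2 * (k - 1) = 2 * k - 2 by omega]
    by_contra hc
    push_neg at hc
    have h1 : G.Adj a (f0 m) := by
      by_contra h
      have : χ m = 1 := by simp [hχdef, h]
      omega
    have h2 : G.Adj a (f0 (m + (2 * k - 2))) := by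
      by_contra h
      have : χ (m + (2 * k - 2)) = 1 := by simp [hχdef, h]
      omega
    exact hno (m % ℓ) (Nat.mod_lt m hℓpos) (by rw [hf0mod]; exact h1)
      (by rw [hf0modadd]; exact h2)
  obtain ⟨i, hiℓ, ha0, had⟩ := hgood
  -- injectivity of getVert on [0, ℓ)
  have hnodup := hw.support_nodup
  rw [my_support_eq_map_getVert w, ← hℓdef, List.range_succ_eq_map] at hnodup
  simp only [List.map_cons, List.tail_cons] at hnodup
  have hinj1 := List.inj_on_of_nodup_map hnodup
  have hinj : ∀ j j', j < ℓ → j' < ℓ → w.getVert j = w.getVert j' → j = j' := by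
    have h1 : ∀ m m', m < ℓ → m' < ℓ → w.getVert (m + 1) = w.getVert (m' + 1) → m = m' := by
      intro m m' hm hm' h
      have := hinj1 (List.mem_map.2 ⟨m, List.mem_range.2 hm, rfl⟩)
        (List.mem_map.2 ⟨m', List.mem_range.2 hm', rfl⟩) h
      omega
    have hz : w.getVert ℓ = w.getVert 0 := by
      rw [Walk.getVert_zero, hℓdef, Walk.getVert_length]
    intro j j' hj hj' he
    rcases Nat.eq_zero_or_pos j with rfl | hjpos
    · rcases Nat.eq_zero_or_pos j' with rfl | hj'pos
      · rfl
      · exfalso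
        have := h1 (ℓ - 1) (j' - 1) (by omega) (by omega) (by
          rw [show ℓ - 1 + 1 = ℓ by omega, show j' - 1 + 1 = j' by omega, hz]
          exact he)
        omega
    · rcases Nat.eq_zero_or_pos j' with rfl | hj'pos
      · exfalso
        have := h1 (j - 1) (ℓ - 1) (by omega) (by omega) (by
          rw [show ℓ - 1 + 1 = ℓ by omega, show j - 1 + 1 = j by omega, hz]
          exact he)
        omega
      · have := h1 (j - 1) (j' - 1) (by omega) (by omega) (by
          rw [show j - 1 + 1 = j by omega, show j' - 1 + 1 = j' by omega]
          exact he)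
        omega
  have hfinj : ∀ j j', j ≤ 2 * k - 2 → j' ≤ 2 * k - 2 → f0 (i + j) = f0 (i + j') → j = j' := by
    intro j j' hj hj' he
    have he' : w.getVert ((i + j) % ℓ) = w.getVert ((i + j') % ℓ) := he
    have hmm := hinj _ _ (Nat.mod_lt _ hℓpos) (Nat.mod_lt _ hℓpos) he'
    have hmeq : j % ℓ = j' % ℓ := Nat.ModEq.add_left_cancel' i hmm
    rwa [Nat.mod_eq_of_lt (by omega : j < ℓ), Nat.mod_eq_of_lt (by omega : j' < ℓ)] at hmeq
  obtain ⟨p, hplen, hpsupp⟩ := my_exists_walk_chain G (fun j => f0 (i + j)) (2 * k - 2)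
    (fun j _ => hG (i + j))
  have hpathp : p.IsPath := by
    rw [Walk.isPath_def, hpsupp]
    refine (List.nodup_map_iff_inj_on List.nodup_range).2 ?_
    intro x hx y hy hxy
    exact hfinj x y (by have := List.mem_range.1 hx; omega)
      (by have := List.mem_range.1 hy; omega) hxy
  have hnas : a ∉ p.support := by
    rw [hpsupp]
    intro h
    obtain ⟨x, _, hxa⟩ := List.mem_map.1 h
    exact hna (i + x) hxa
  have ha0' : G.Adj a ((fun j => f0 (i + j)) 0) := ha0
  have hlast' : G.Adj ((fun j => f0 (i + j)) (2 * k - 2)) a := had.symm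
  have hcyc : (Walk.cons ha0' (p.concat hlast')).IsCycle := by
    rw [Walk.cons_isCycle_iff]
    constructor
    · rw [Walk.isPath_def, Walk.support_concat]
      rw [List.nodup_append]
      refine ⟨hpathp.support_nodup, List.nodup_singleton a, ?_⟩
      intro x hx y hy hxy
      rw [List.mem_singleton] at hy
      subst hy hxy
      exact hnas hx
    · rw [Walk.edges_concat, List.concat_eq_append]
      intro hmem
      rcases List.mem_append.1 hmem with h | h
      · exact hnas (Walk.fst_mem_support_of_mem_edges p h)
      · rw [List.mem_singleton, Sym2.eq_iff] at h
        rcases h with ⟨h1, h2⟩ | ⟨h1, h2⟩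
        · exact hna (i + (2 * k - 2)) h1.symm
        · have := hfinj 0 (2 * k - 2) (by omega) (by omega) h2
          omega
  have hclen : (Walk.cons ha0' (p.concat hlast')).length = 2 * k := by
    rw [Walk.length_cons, Walk.length_concat, hplen]
    omega
  exact hfree a _ hcyc hclen
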